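/- For every finite strategic game H and every k ≥ 0, LW^k = GW^k: the k-th iterate (starting from the full game H) of the local elimination of strategies weakly dominated by a pure strategy equals the k-th iterate of the corresponding global elimination operator. -/

import Mathlib

open Function

/-- The opponents' part of the joint strategy `t` lies in the restriction `G`. -/
def OppIn {ι : Type*} [DecidableEq ι] {σ : ι → Type*} (G : ∀ i, Set (σ i)) (i : ι) (t : ∀ j, σ j) : Prop :=
  ∀ j, j ≠ i → t j ∈ G j

/-- `s'` strictly dominates `s` on the restriction `G` (pure strategies). -/
def SDom {ι : Type*} [DecidableEq ι] {σ : ι → Type*} (p : ι → (∀ j, σ j) → ℝ) (G : ∀ i, Set (σ i))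
    (i : ι) (s' s : σ i) : Prop :=
  ∀ t : ∀ j, σ j, OppIn G i t → p i (update t i s) < p i (update t i s')

/-- `s'` weakly dominates `s` on the restriction `G` (pure strategies). -/
def WDom {ι : Type*} [DecidableEq ι] {σ : ι → Type*} (p : ι → (∀ j, σ j) → ℝ) (G : ∀ i, Set (σ i))
    (i : ι) (s' s : σ i) : Prop :=
  (∀ t : ∀ j, σ j, OppIn G i t → p i (update t i s) ≤ p i (update t i s')) ∧
  (∃ t : ∀ j, σ j, OppIn G i t ∧ p i (update t i s) < p i (update t i s'))

/-- Probability distributions over a finite type with support contained in `A`. -/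
def Mixed {α : Type*} [Fintype α] (A : Set α) : Set (α → ℝ) :=
  {m | (∀ a, 0 ≤ m a) ∧ ∑ a, m a = 1 ∧ ∀ a, m a ≠ 0 → a ∈ A}

/-- Expected payoff of player `i` using mixed strategy `m` against `t₋ᵢ`. -/
def epay {ι : Type*} [DecidableEq ι] {σ : ι → Type*} [∀ i, Fintype (σ i)]
    (p : ι → (∀ j, σ j) → ℝ) (i : ι) (m : σ i → ℝ) (t : ∀ j, σ j) : ℝ :=
  ∑ a, m a * p i (update t i a)

/-- The mixed strategy `m` strictly dominates `s` on `G`. -/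
def MSDom {ι : Type*} [DecidableEq ι] {σ : ι → Type*} [∀ i, Fintype (σ i)]
    (p : ι → (∀ j, σ j) → ℝ) (G : ∀ i, Set (σ i)) (i : ι) (m : σ i → ℝ) (s : σ i) : Prop :=
  ∀ t : ∀ j, σ j, OppIn G i t → p i (update t i s) < epay p i m t

/-- The mixed strategy `m` weakly dominates `s` on `G`. -/
def MWDom {ι : Type*} [DecidableEq ι] {σ : ι → Type*} [∀ i, Fintype (σ i)]
    (p : ι → (∀ j, σ j) → ℝ) (G : ∀ i, Set (σ i)) (i : ι) (m : σ i → ℝ) (s : σ i) : Prop :=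
  (∀ t : ∀ j, σ j, OppIn G i t → p i (update t i s) ≤ epay p i m t) ∧
  (∃ t : ∀ j, σ j, OppIn G i t ∧ p i (update t i s) < epay p i m t)

/-- Local elimination of strategies strictly dominated by a pure strategy. -/
def LS {ι : Type*} [DecidableEq ι] {σ : ι → Type*} (p : ι → (∀ j, σ j) → ℝ)
    (G : ∀ i, Set (σ i)) : ∀ i, Set (σ i) :=
  fun i => {s | s ∈ G i ∧ ¬ ∃ s' ∈ G i, SDom p G i s' s}

/-- Global elimination of strategies strictly dominated by a pure strategy. -/
def GS {ι : Type*} [DecidableEq ι] {σ : ι → Type*} (p : ι → (∀ j, σ j) → ℝ)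
    (G : ∀ i, Set (σ i)) : ∀ i, Set (σ i) :=
  fun i => {s | s ∈ G i ∧ ¬ ∃ s' : σ i, SDom p G i s' s}

/-- Local elimination of strategies weakly dominated by a pure strategy. -/
def LW {ι : Type*} [DecidableEq ι] {σ : ι → Type*} (p : ι → (∀ j, σ j) → ℝ)
    (G : ∀ i, Set (σ i)) : ∀ i, Set (σ i) :=
  fun i => {s | s ∈ G i ∧ ¬ ∃ s' ∈ G i, WDom p G i s' s}

/-- Global elimination of strategies weakly dominated by a pure strategy. -/
def GW {ι : Type*} [DecidableEq ι] {σ : ι → Type*} (p : ι → (∀ j, σ j) → ℝ)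
    (G : ∀ i, Set (σ i)) : ∀ i, Set (σ i) :=
  fun i => {s | s ∈ G i ∧ ¬ ∃ s' : σ i, WDom p G i s' s}

/-- Local elimination of strategies strictly dominated by a mixed strategy. -/
def MLS {ι : Type*} [DecidableEq ι] {σ : ι → Type*} [∀ i, Fintype (σ i)] (p : ι → (∀ j, σ j) → ℝ)
    (G : ∀ i, Set (σ i)) : ∀ i, Set (σ i) :=
  fun i => {s | s ∈ G i ∧ ¬ ∃ m ∈ Mixed (G i), MSDom p G i m s}

/-- Global elimination of strategies strictly dominated by a mixed strategy. -/
def MGS {ι : Type*} [DecidableEq ι] {σ : ι → Type*} [∀ i, Fintype (σ i)] (p : ι → (∀ j, σ j) → ℝ)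
    (G : ∀ i, Set (σ i)) : ∀ i, Set (σ i) :=
  fun i => {s | s ∈ G i ∧ ¬ ∃ m ∈ Mixed (Set.univ : Set (σ i)), MSDom p G i m s}

/-- Local elimination of strategies weakly dominated by a mixed strategy. -/
def MLW {ι : Type*} [DecidableEq ι] {σ : ι → Type*} [∀ i, Fintype (σ i)] (p : ι → (∀ j, σ j) → ℝ)
    (G : ∀ i, Set (σ i)) : ∀ i, Set (σ i) :=
  fun i => {s | s ∈ G i ∧ ¬ ∃ m ∈ Mixed (G i), MWDom p G i m s}

/-- Global elimination of strategies weakly dominated by a mixed strategy. -/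
def MGW {ι : Type*} [DecidableEq ι] {σ : ι → Type*} [∀ i, Fintype (σ i)] (p : ι → (∀ j, σ j) → ℝ)
    (G : ∀ i, Set (σ i)) : ∀ i, Set (σ i) :=
  fun i => {s | s ∈ G i ∧ ¬ ∃ m ∈ Mixed (Set.univ : Set (σ i)), MWDom p G i m s}

section Aux

variable {ι : Type*} [DecidableEq ι] {σ : ι → Type*}

lemma oppIn_mono {G G' : ∀ i, Set (σ i)} (h : ∀ j, G j ⊆ G' j) {i : ι} {t : ∀ j, σ j}
    (ht : OppIn G i t) : OppIn G' i t := fun j hj => h j (ht j hj)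

lemma wdom_of_le {p : ι → (∀ j, σ j) → ℝ} {G : ∀ i, Set (σ i)} {i : ι} {w u s : σ i}
    (hle : ∀ t, OppIn G i t → p i (update t i u) ≤ p i (update t i w))
    (h : WDom p G i u s) : WDom p G i w s :=
  ⟨fun t ht => (h.1 t ht).trans (hle t ht),
   let ⟨t, ht, hlt⟩ := h.2; ⟨t, ht, hlt.trans_le (hle t ht)⟩⟩

lemma wdom_trans {p : ι → (∀ j, σ j) → ℝ} {G : ∀ i, Set (σ i)} {i : ι} {a b c : σ i}
    (h1 : WDom p G i a b) (h2 : WDom p G i b c) : WDom p G i a c :=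
  ⟨fun t ht => (h2.1 t ht).trans (h1.1 t ht),
   let ⟨t, ht, hlt⟩ := h2.2; ⟨t, ht, hlt.trans_le (h1.1 t ht)⟩⟩

lemma wdom_irrefl {p : ι → (∀ j, σ j) → ℝ} {G : ∀ i, Set (σ i)} {i : ι} {u : σ i} :
    ¬ WDom p G i u u := fun h => let ⟨_, _, hlt⟩ := h.2; lt_irrefl _ hlt

lemma iterLW_subset (p : ι → (∀ j, σ j) → ℝ) {m n : ℕ} (h : m ≤ n) (j : ι) :
    ((LW p)^[n] ⊤ : ∀ i, Set (σ i)) j ⊆ ((LW p)^[m] ⊤) j := by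
  obtain ⟨d, rfl⟩ := Nat.exists_eq_add_of_le h
  clear h
  induction d with
  | zero => exact subset_rfl
  | succ d ih =>
      intro s hs
      rw [show m + (d + 1) = (m + d) + 1 by omega, Function.iterate_succ_apply'] at hs
      exact ih hs.1

variable [∀ i, Fintype (σ i)]

open Classical in
/-- The last stage (up to `k`) at which `u` is still present in the `LW`-iteration. -/
noncomputable def stg (p : ι → (∀ j, σ j) → ℝ) (k : ℕ) (i : ι) (u : σ i) : ℕ :=
  Nat.findGreatest (fun m => u ∈ ((LW p)^[m] ⊤ : ∀ j, Set (σ j)) i) k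

open Classical in
/-- Termination measure. -/
noncomputable def meas (p : ι → (∀ j, σ j) → ℝ) (k : ℕ) (i : ι) (u : σ i) : ℕ :=
  (k - stg p k i u) * (Fintype.card (σ i) + 1) +
    (Fintype.card (σ i) + 1 -
      (Finset.univ.filter fun x => WDom p ((LW p)^[stg p k i u] ⊤) i u x).card)

lemma stg_mem (p : ι → (∀ j, σ j) → ℝ) (k : ℕ) (i : ι) (u : σ i) :
    u ∈ ((LW p)^[stg p k i u] ⊤ : ∀ j, Set (σ j)) i := by
  classical
  unfold stg
  exact Nat.findGreatest_spec (P := fun m => u ∈ ((LW p)^[m] ⊤ : ∀ j, Set (σ j)) i)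
    (Nat.zero_le k) (by trivial)

lemma stg_is_greatest (p : ι → (∀ j, σ j) → ℝ) (k : ℕ) (i : ι) (u : σ i) {m' : ℕ}
    (h1 : stg p k i u < m') (h2 : m' ≤ k) : u ∉ ((LW p)^[m'] ⊤ : ∀ j, Set (σ j)) i := by
  classical
  unfold stg at h1
  exact Nat.findGreatest_is_greatest h1 h2

lemma stg_ge (p : ι → (∀ j, σ j) → ℝ) (k : ℕ) (i : ι) (u : σ i) {m : ℕ}
    (h : m ≤ k) (hmem : u ∈ ((LW p)^[m] ⊤ : ∀ j, Set (σ j)) i) : m ≤ stg p k i u := by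
  classical
  unfold stg
  exact Nat.le_findGreatest (P := fun m => u ∈ ((LW p)^[m] ⊤ : ∀ j, Set (σ j)) i) h hmem

lemma stg_le (p : ι → (∀ j, σ j) → ℝ) (k : ℕ) (i : ι) (u : σ i) : stg p k i u ≤ k := by
  classical
  unfold stg
  exact Nat.findGreatest_le k

lemma key_step (p : ι → (∀ j, σ j) → ℝ) (k : ℕ) (i : ι) (s : σ i) (u : σ i)
    (huS : WDom p ((LW p)^[k] ⊤) i u s)
    (hu : u ∉ ((LW p)^[k] ⊤ : ∀ j, Set (σ j)) i) :
    ∃ v : σ i, meas p k i v < meas p k i u ∧ WDom p ((LW p)^[k] ⊤) i v s := by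
  classical
  set N := Fintype.card (σ i) + 1 with hN
  set m := stg p k i u with hm
  have hmk : m ≤ k := stg_le p k i u
  have hmem : u ∈ ((LW p)^[m] ⊤ : ∀ j, Set (σ j)) i := stg_mem p k i u
  have hmlt : m < k := by
    rcases lt_or_eq_of_le hmk with h | h
    · exact h
    · exact absurd (h ▸ hmem) hu
  have hnot : u ∉ ((LW p)^[m + 1] ⊤ : ∀ j, Set (σ j)) i :=
    stg_is_greatest p k i u (by omega) (by omega)
  rw [Function.iterate_succ_apply'] at hnot
  have hdom : ∃ v ∈ ((LW p)^[m] ⊤ : ∀ j, Set (σ j)) i, WDom p ((LW p)^[m] ⊤) i v u := by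
    by_contra hc
    exact hnot ⟨hmem, hc⟩
  obtain ⟨v, hvmem, hv⟩ := hdom
  have hGsub : ∀ j, ((LW p)^[k] ⊤ : ∀ i, Set (σ i)) j ⊆ ((LW p)^[m] ⊤) j :=
    fun j => iterLW_subset p hmk j
  have hvS : WDom p ((LW p)^[k] ⊤) i v s :=
    wdom_of_le (fun t ht => hv.1 t (oppIn_mono hGsub ht)) huS
  refine ⟨v, ?_, hvS⟩
  have hmv : m ≤ stg p k i v := stg_ge p k i v hmk hvmem
  have hcu_le : (Finset.univ.filter fun x => WDom p ((LW p)^[m] ⊤) i u x).card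
      ≤ Fintype.card (σ i) := by
    simpa using Finset.card_filter_le Finset.univ _
  rcases lt_or_eq_of_le hmv with hlt | heq
  · -- stage strictly increases
    have hsv : stg p k i v ≤ k := stg_le p k i v
    have h1 : meas p k i v ≤ (k - stg p k i v) * N + N := by
      unfold meas
      exact Nat.add_le_add_left (Nat.sub_le _ _) _
    have h2 : (k - stg p k i v) * N + N = (k - stg p k i v + 1) * N := by ring
    have h3 : (k - stg p k i v + 1) ≤ k - m := by omega
    have h4 : (k - stg p k i v + 1) * N ≤ (k - m) * N := Nat.mul_le_mul_right N h3
    have h5 : meas p k i u = (k - m) * N +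
        (N - (Finset.univ.filter fun x => WDom p ((LW p)^[m] ⊤) i u x).card) := by
      unfold meas; rw [← hm]
    have h6 : 1 ≤ N - (Finset.univ.filter fun x => WDom p ((LW p)^[m] ⊤) i u x).card := by
      omega
    omega
  · -- same stage: the set of dominated strategies strictly grows
    have hssub : (Finset.univ.filter fun x => WDom p ((LW p)^[m] ⊤) i u x) ⊂
        (Finset.univ.filter fun x => WDom p ((LW p)^[m] ⊤) i v x) := by
      constructor
      · intro x hx
        simp only [Finset.mem_filter, Finset.mem_univ, true_and] at hx ⊢
        exact wdom_trans hv hx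
      · intro hsub
        have hu_in : u ∈ (Finset.univ.filter fun x => WDom p ((LW p)^[m] ⊤) i v x) := by
          simp only [Finset.mem_filter, Finset.mem_univ, true_and]
          exact hv
        have : ∀ x ∈ (Finset.univ.filter fun x => WDom p ((LW p)^[m] ⊤) i v x),
            x ∈ (Finset.univ.filter fun x => WDom p ((LW p)^[m] ⊤) i u x) := fun x hx => hsub hx
        have := this u hu_in
        simp only [Finset.mem_filter, Finset.mem_univ, true_and] at this
        exact wdom_irrefl this
    have hcard := Finset.card_lt_card hssub
    have hcv_le : (Finset.univ.filter fun x => WDom p ((LW p)^[m] ⊤) i v x).card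
        ≤ Fintype.card (σ i) := by
      simpa using Finset.card_filter_le Finset.univ _
    have h5 : meas p k i u = (k - m) * N +
        (N - (Finset.univ.filter fun x => WDom p ((LW p)^[m] ⊤) i u x).card) := by
      unfold meas; rw [← hm]
    have h6 : meas p k i v = (k - m) * N +
        (N - (Finset.univ.filter fun x => WDom p ((LW p)^[m] ⊤) i v x).card) := by
      unfold meas; rw [← heq]
    omega

lemma key (p : ι → (∀ j, σ j) → ℝ) (k : ℕ) (i : ι) (s : σ i) :
    ∀ n (u : σ i), meas p k i u ≤ n → WDom p ((LW p)^[k] ⊤) i u s →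
      ∃ w ∈ ((LW p)^[k] ⊤ : ∀ j, Set (σ j)) i, WDom p ((LW p)^[k] ⊤) i w s := by
  intro n
  induction n with
  | zero =>
      intro u hle hdom
      by_cases hu : u ∈ ((LW p)^[k] ⊤ : ∀ j, Set (σ j)) i
      · exact ⟨u, hu, hdom⟩
      · obtain ⟨v, hv, _⟩ := key_step p k i s u hdom hu
        omega
  | succ n ih =>
      intro u hle hdom
      by_cases hu : u ∈ ((LW p)^[k] ⊤ : ∀ j, Set (σ j)) i
      · exact ⟨u, hu, hdom⟩
      · obtain ⟨v, hv, hvS⟩ := key_step p k i s u hdom hu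
        exact ih v (by omega) hvS

end Aux

/-- For every k, LW^k = GW^k (iterations starting at the full game). -/
theorem LW_iter_eq_GW_iter {ι : Type*} [DecidableEq ι] [Fintype ι] {σ : ι → Type*}
    [∀ i, Fintype (σ i)] [∀ i, Nonempty (σ i)]
    (hn : 1 < Fintype.card ι) (p : ι → (∀ j, σ j) → ℝ)
    (k : ℕ) :
    (LW p)^[k] ⊤ = (GW p)^[k] ⊤ := by
  induction k with
  | zero => rfl
  | succ k ih =>
      rw [Function.iterate_succ_apply', Function.iterate_succ_apply', ← ih]
      funext i
      ext s
      constructor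
      · rintro ⟨hsG, hnl⟩
        refine ⟨hsG, ?_⟩
        rintro ⟨s', hs'⟩
        obtain ⟨w, hw, hwd⟩ := key p k i s (meas p k i s') s' le_rfl hs'
        exact hnl ⟨w, hw, hwd⟩
      · rintro ⟨hsG, hng⟩
        exact ⟨hsG, fun ⟨s', _, h⟩ => hng ⟨s', h⟩⟩
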